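/- arXiv:1512.07505 — 4 statements merged into one kernel-verified Lean document; each statement's English description precedes it below -/
import Mathlib

section
/- Let F = {C_1, ..., C_j} be a finite family of j > d compact convex sets in R^d with nonempty intersection. Then the lexicographic minimum of the intersection of all sets in F equals the lexicographic minimum of the intersection of some subfamily of d sets from F. -/
/-- Lexicographic strict order on `ℝ^d`. -/
def LexLt {d : ℕ} (x y : Fin d → ℝ) : Prop :=
  ∃ i : Fin d, (∀ j : Fin d, j < i → x j = y j) ∧ x i < y i

/-- `m` is the lexicographic minimum of `S`. -/
def IsLexMin {d : ℕ} (S : Set (Fin d → ℝ)) (m : Fin d → ℝ) : Prop :=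
  m ∈ S ∧ ∀ x ∈ S, m = x ∨ LexLt m x

lemma lexLt_trichotomy {d : ℕ} {x y : Fin d → ℝ} (h : x ≠ y) :
    LexLt x y ∨ LexLt y x := by
  classical
  have hne : (Finset.univ.filter (fun i => x i ≠ y i)).Nonempty := by
    by_contra hc
    apply h
    funext i
    by_contra hxi
    exact hc ⟨i, by simp [hxi]⟩
  set i := (Finset.univ.filter (fun i => x i ≠ y i)).min' hne with hi
  have hmem : x i ≠ y i := by
    have := (Finset.univ.filter (fun i => x i ≠ y i)).min'_mem hne
    simpa using this
  have hlt : ∀ j : Fin d, j < i → x j = y j := by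
    intro k hk
    by_contra hkne
    have : i ≤ k := Finset.min'_le _ _ (by simp [hkne])
    exact absurd hk (not_lt.mpr this)
  rcases lt_or_gt_of_ne hmem with hc | hc
  · exact Or.inl ⟨i, hlt, hc⟩
  · exact Or.inr ⟨i, fun j hj => (hlt j hj).symm, hc⟩

lemma lexLt_asymm {d : ℕ} {x y : Fin d → ℝ} (h : LexLt x y) : ¬ LexLt y x := by
  rintro ⟨i₂, h2, h2'⟩
  obtain ⟨i₁, h1, h1'⟩ := h
  rcases lt_trichotomy i₁ i₂ with hc | hc | hc
  · exact absurd (h2 i₁ hc) (ne_of_gt h1')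
  · subst hc; exact absurd h2' (not_lt.mpr (le_of_lt h1'))
  · exact absurd (h1 i₂ hc) (ne_of_gt h2')

lemma lexLt_irrefl {d : ℕ} {x : Fin d → ℝ} : ¬ LexLt x x := by
  rintro ⟨i, _, hi⟩; exact lt_irrefl _ hi

lemma convex_lexLt {d : ℕ} (m : Fin d → ℝ) : Convex ℝ {x | LexLt x m} := by
  intro x hx y hy a b ha hb hab
  rcases eq_or_lt_of_le ha with rfl | ha'
  · simpa [show b = 1 by linarith] using hy
  rcases eq_or_lt_of_le hb with rfl | hb'
  · simpa [show a = 1 by linarith] using hx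
  obtain ⟨i₁, h1, h1'⟩ := hx
  obtain ⟨i₂, h2, h2'⟩ := hy
  refine ⟨min i₁ i₂, ?_, ?_⟩
  · intro k hk
    have hx' := h1 k (lt_of_lt_of_le hk (min_le_left _ _))
    have hy' := h2 k (lt_of_lt_of_le hk (min_le_right _ _))
    simp only [Pi.add_apply, Pi.smul_apply, smul_eq_mul, hx', hy']
    rw [← add_mul, hab, one_mul]
  · have hxle : x (min i₁ i₂) ≤ m (min i₁ i₂) := by
      rcases lt_or_eq_of_le (min_le_left i₁ i₂) with hc | hc
      · exact le_of_eq (h1 _ hc)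
      · rw [hc]; exact le_of_lt h1'
    have hyle : y (min i₁ i₂) ≤ m (min i₁ i₂) := by
      rcases lt_or_eq_of_le (min_le_right i₁ i₂) with hc | hc
      · exact le_of_eq (h2 _ hc)
      · rw [hc]; exact le_of_lt h2'
    have hstrict : x (min i₁ i₂) < m (min i₁ i₂) ∨ y (min i₁ i₂) < m (min i₁ i₂) := by
      rcases min_cases i₁ i₂ with ⟨hc, _⟩ | ⟨hc, _⟩
      · left; rw [hc]; exact h1'
      · right; rw [hc]; exact h2'
    simp only [Pi.add_apply, Pi.smul_apply, smul_eq_mul]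
    rcases hstrict with hs | hs
    · calc a * x (min i₁ i₂) + b * y (min i₁ i₂)
          < a * m (min i₁ i₂) + b * m (min i₁ i₂) := by
            apply add_lt_add_of_lt_of_le
            · exact (mul_lt_mul_iff_right₀ ha').mpr hs
            · exact mul_le_mul_of_nonneg_left hyle hb
        _ = m (min i₁ i₂) := by rw [← add_mul, hab, one_mul]
    · calc a * x (min i₁ i₂) + b * y (min i₁ i₂)
          < a * m (min i₁ i₂) + b * m (min i₁ i₂) := by
            apply add_lt_add_of_le_of_lt
            · exact mul_le_mul_of_nonneg_left hxle ha
            · exact (mul_lt_mul_iff_right₀ hb').mpr hs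
        _ = m (min i₁ i₂) := by rw [← add_mul, hab, one_mul]

/-- for a family of `j > d` compact convex sets in `ℝ^d` with nonempty
intersection, the lexicographic minimum of the whole intersection equals the
lexicographic minimum of the intersection of some `d` of the sets. -/
theorem lex_min_of_d_tuple (d j : ℕ) (hdj : d < j) (C : Fin j → Set (Fin d → ℝ))
    (hcomp : ∀ i, IsCompact (C i)) (hconv : ∀ i, Convex ℝ (C i))
    (hne : (⋂ i, C i).Nonempty) (m : Fin d → ℝ) (hm : IsLexMin (⋂ i, C i) m) :
    ∃ t : Finset (Fin j), t.card = d ∧ IsLexMin (⋂ i ∈ t, C i) m := by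
  classical
  by_contra hcon
  push_neg at hcon
  -- For every `t` of card `d`, there is a point in the subintersection lex-below `m`.
  have key : ∀ t : Finset (Fin j), t.card = d →
      ∃ x, x ∈ (⋂ i ∈ t, C i) ∧ LexLt x m := by
    intro t ht
    have hmem : m ∈ ⋂ i ∈ t, C i := by
      have := hm.1
      simp only [Set.mem_iInter] at this ⊢
      exact fun i _ => this i
    have := hcon t ht
    rw [IsLexMin] at this
    push_neg at this
    obtain ⟨x, hx, hx1, hx2⟩ := this hmem
    rcases lexLt_trichotomy (Ne.symm hx1) with h | h
    · exact ⟨x, hx, h⟩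
    · exact absurd h hx2
  -- Apply Helly's theorem to the family `C` extended by `{x | LexLt x m}`.
  set F : Option (Fin j) → Set (Fin d → ℝ) :=
    fun o => Option.elim o {x | LexLt x m} C with hF
  have hconvF : ∀ o ∈ (Finset.univ : Finset (Option (Fin j))), Convex ℝ (F o) := by
    rintro (_ | i) _
    · exact convex_lexLt m
    · exact hconv i
  have hinter : ∀ I ⊆ (Finset.univ : Finset (Option (Fin j))),
      I.card ≤ Module.finrank ℝ (Fin d → ℝ) + 1 → (⋂ i ∈ I, F i).Nonempty := by
    intro I _ hIcard
    have hrk : Module.finrank ℝ (Fin d → ℝ) = d := by simp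
    rw [hrk] at hIcard
    by_cases hnone : none ∈ I
    · -- the extra set is involved; use `key` on a superset of the `some` part
      set s : Finset (Fin j) := I.erase none |>.image (fun o => o.getD ⟨0, lt_of_le_of_lt (Nat.zero_le d) hdj⟩) with hs
      have hscard : s.card ≤ d := by
        calc s.card ≤ (I.erase none).card := Finset.card_image_le
          _ = I.card - 1 := by rw [Finset.card_erase_of_mem hnone]
          _ ≤ d := by omega
      obtain ⟨t, hst, htcard⟩ := Finset.exists_superset_card_eq hscard
        (by simpa using le_of_lt hdj)
      obtain ⟨x, hx, hxlt⟩ := key t htcard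
      refine ⟨x, ?_⟩
      simp only [Set.mem_iInter]
      rintro (_ | i) hoI
      · exact hxlt
      · have : i ∈ s := by
          rw [hs]
          exact Finset.mem_image.mpr ⟨some i, Finset.mem_erase.mpr ⟨by simp, hoI⟩, rfl⟩
        have hit : i ∈ t := hst this
        simp only [Set.mem_iInter] at hx
        exact hx i hit
    · -- only sets `C i` are involved; `m` works
      refine ⟨m, ?_⟩
      simp only [Set.mem_iInter]
      rintro (_ | i) hoI
      · exact absurd hoI hnone
      · have := hm.1
        simp only [Set.mem_iInter] at this
        exact this i
  have := Convex.helly_theorem' (𝕜 := ℝ) hconvF hinter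
  obtain ⟨x, hx⟩ := this
  simp only [Set.mem_iInter] at hx
  have hxC : x ∈ ⋂ i, C i := Set.mem_iInter.mpr fun i => hx (some i) (Finset.mem_univ _)
  have hxlt : LexLt x m := hx none (Finset.mem_univ _)
  rcases hm.2 x hxC with h | h
  · subst h; exact lexLt_irrefl hxlt
  · exact lexLt_asymm h hxlt
end

section
/- Let P be a set of n points in general position in R^d. Suppose x is the lexicographic minimum of the intersection conv(A_1) ∩ ... ∩ conv(A_d), where A_1, ..., A_d are disjoint subsets of P, and suppose x lies in the interior of conv(A_j) for some j with |A_j| = d+1. Then x is also the lexicographic minimum of the intersection of conv(A_i) over all i ≠ j. -/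
theorem lexlt_trichotomy {d : ℕ} (x y : Fin d → ℝ) :
    x = y ∨ LexLt x y ∨ LexLt y x := by
  by_cases hxy : x = y
  · exact Or.inl hxy
  right
  have hne : (Finset.univ.filter (fun i => x i ≠ y i)).Nonempty := by
    rcases Function.ne_iff.mp hxy with ⟨i, hi⟩
    exact ⟨i, by simp [hi]⟩
  set i := (Finset.univ.filter (fun i => x i ≠ y i)).min' hne with hidef
  have hi_mem := (Finset.univ.filter (fun i => x i ≠ y i)).min'_mem hne
  have hi_ne : x i ≠ y i := by
    have := Finset.mem_filter.mp hi_mem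
    exact this.2
  have hlt : ∀ k : Fin d, k < i → x k = y k := by
    intro k hk
    by_contra hne'
    have : i ≤ k := Finset.min'_le _ _ (by simp [hne'])
    exact absurd hk (not_lt.mpr this)
  rcases lt_or_gt_of_ne hi_ne with h | h
  · exact Or.inl ⟨i, hlt, h⟩
  · exact Or.inr ⟨i, fun k hk => (hlt k hk).symm, h⟩

theorem lexlt_asymm {d : ℕ} (x y : Fin d → ℝ) : LexLt x y → ¬ LexLt y x := by
  rintro ⟨i, hi1, hi2⟩ ⟨k, hk1, hk2⟩
  rcases lt_trichotomy i k with h | h | h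
  · rw [hk1 i h] at hi2
    exact lt_irrefl _ hi2
  · rw [h] at hi2
    exact lt_irrefl _ (hi2.trans hk2)
  · rw [hi1 k h] at hk2
    exact lt_irrefl _ hk2

/-- if `x` is the lexicographic minimum of `⋂ᵢ conv(Aᵢ)` for disjoint
subsets `A₁,…,A_d` of a point set `P` in general position, and `x` lies in the
interior of `conv(A_j)` where `|A_j| = d+1`, then `x` is also the lexicographic
minimum of the intersection of the remaining `d-1` convex hulls. -/
theorem lex_min_drop_interior_set (d : ℕ) (P : Finset (Fin d → ℝ))
    (hgen : ∀ T : Finset (Fin d → ℝ), T ⊆ P → T.card = d + 1 →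
      AffineIndependent ℝ (fun x : T => (x : Fin d → ℝ)))
    (A : Fin d → Finset (Fin d → ℝ))
    (hsub : ∀ i, A i ⊆ P)
    (hdisj : ∀ i j, i ≠ j → Disjoint (A i) (A j))
    (x : Fin d → ℝ)
    (hx : IsLexMin (⋂ i, convexHull ℝ (A i : Set (Fin d → ℝ))) x)
    (j : Fin d) (hcard : (A j).card = d + 1)
    (hint : x ∈ interior (convexHull ℝ (A j : Set (Fin d → ℝ)))) :
    IsLexMin (⋂ i ∈ ({j}ᶜ : Set (Fin d)), convexHull ℝ (A i : Set (Fin d → ℝ))) x := by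
  have hxall : ∀ i, x ∈ convexHull ℝ (A i : Set (Fin d → ℝ)) := by
    intro i
    exact Set.mem_iInter.mp hx.1 i
  constructor
  · exact Set.mem_iInter₂.mpr fun i _ => hxall i
  intro y hy
  have hyall : ∀ i, i ≠ j → y ∈ convexHull ℝ (A i : Set (Fin d → ℝ)) := by
    intro i hi
    exact Set.mem_iInter₂.mp hy i hi
  rcases lexlt_trichotomy x y with h | h | h
  · exact Or.inl h
  · exact Or.inr h
  -- LexLt y x : derive a contradiction
  exfalso
  obtain ⟨i, hieq, hilt⟩ := h
  have hyx : y ≠ x := by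
    intro he; rw [he] at hilt; exact lt_irrefl _ hilt
  obtain ⟨ε, hε, hball⟩ := Metric.isOpen_iff.mp isOpen_interior x hint
  set n : ℝ := ‖y - x‖ with hn
  have hn0 : 0 ≤ n := norm_nonneg _
  set t : ℝ := min 1 (ε / (2 * (n + 1))) with htdef
  have ht0 : 0 < t := lt_min one_pos (by positivity)
  have ht1 : t ≤ 1 := min_le_left _ _
  have htε : t * n < ε := by
    have h1 : t ≤ ε / (2 * (n + 1)) := min_le_right _ _
    have h2 : t * n ≤ ε / (2 * (n + 1)) * n := by
      apply mul_le_mul_of_nonneg_right h1 hn0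
    have h3 : ε / (2 * (n + 1)) * n < ε := by
      rw [div_mul_eq_mul_div, div_lt_iff₀ (by positivity)]
      nlinarith
    linarith
  set z : Fin d → ℝ := x + t • (y - x) with hzdef
  have hzk : ∀ k, z k = x k + t * (y k - x k) := by
    intro k; simp [hzdef]
  -- z ∈ conv (A j) via the ball
  have hzj : z ∈ convexHull ℝ (A j : Set (Fin d → ℝ)) := by
    apply interior_subset
    apply hball
    rw [Metric.mem_ball, dist_eq_norm]
    have : z - x = t • (y - x) := by
      rw [hzdef]; abel
    rw [this, norm_smul, Real.norm_eq_abs, abs_of_pos ht0]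
    exact htε
  -- z ∈ conv (A i) for i ≠ j by convexity
  have hzi : ∀ i, i ≠ j → z ∈ convexHull ℝ (A i : Set (Fin d → ℝ)) := by
    intro i hi
    have hc := convex_convexHull ℝ (A i : Set (Fin d → ℝ))
    have := hc (hxall i) (hyall i hi) (a := 1 - t) (b := t)
      (by linarith) (le_of_lt ht0) (by ring)
    convert this using 1
    rw [hzdef]
    ext k
    simp [smul_sub]
    ring
  have hzT : z ∈ ⋂ i, convexHull ℝ (A i : Set (Fin d → ℝ)) := by
    apply Set.mem_iInter.mpr
    intro i
    by_cases hij : i = j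
    · rw [hij]; exact hzj
    · exact hzi i hij
  have hzlt : LexLt z x := by
    refine ⟨i, ?_, ?_⟩
    · intro k hk
      rw [hzk k, hieq k hk]
      ring
    · rw [hzk i]
      nlinarith
  rcases hx.2 z hzT with he | hlt
  · obtain ⟨i', _, hi'⟩ := hzlt
    rw [he] at hi'
    exact lt_irrefl _ hi'
  · exact lexlt_asymm _ _ hlt hzlt
end

section
/- Let P ⊂ R^d be a set of n/r points, with d ≥ 3 and 1 ≤ j ≤ d−1, such that no d+2 points of P lie in a common hyperplane. Let V be an affine subspace of R^d of dimension d−j, and let S be a family of α·n^{j+1}/r^{j+1} many (j+1)-element subsets of P whose convex hulls each intersect V. Then there is a constant c_α (depending only on α, d) such that if n ≥ c_α·r, at least α·n^{j+1}/(2r^{j+1}) of the (j+1)-tuples in S have convex hulls intersecting V in exactly one point, lying in their relative interior. -/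
open Finset Module Set

noncomputable section SimplexAux
variable {d : ℕ}

/-- Join of the affine span of a finite point set with an affine subspace. -/
private def KV (V : AffineSubspace ℝ (Fin d → ℝ)) (B : Finset (Fin d → ℝ)) :
    AffineSubspace ℝ (Fin d → ℝ) :=
  affineSpan ℝ ((B : Set (Fin d → ℝ)) ∪ (V : Set (Fin d → ℝ)))

/-- Dimension of the join. -/
private def JD (V : AffineSubspace ℝ (Fin d → ℝ)) (B : Finset (Fin d → ℝ)) : ℕ :=
  finrank ℝ (KV V B).direction

private lemma KV_eq_sup (V : AffineSubspace ℝ (Fin d → ℝ)) (B : Finset (Fin d → ℝ)) :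
    KV V B = affineSpan ℝ (B : Set (Fin d → ℝ)) ⊔ V := by
  rw [KV, AffineSubspace.span_union, AffineSubspace.affineSpan_coe]

private lemma KV_empty (V : AffineSubspace ℝ (Fin d → ℝ)) : KV V ∅ = V := by
  simp [KV, AffineSubspace.affineSpan_coe]

private lemma KV_mono (V : AffineSubspace ℝ (Fin d → ℝ)) {B C : Finset (Fin d → ℝ)}
    (h : B ⊆ C) : KV V B ≤ KV V C :=
  affineSpan_mono ℝ (Set.union_subset_union_left _ (by exact_mod_cast h))

private lemma le_KV (V : AffineSubspace ℝ (Fin d → ℝ)) (B : Finset (Fin d → ℝ)) :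
    V ≤ KV V B := by
  conv_lhs => rw [← AffineSubspace.affineSpan_coe V]
  exact affineSpan_mono ℝ Set.subset_union_right

private lemma mem_KV_of_mem (V : AffineSubspace ℝ (Fin d → ℝ)) {B : Finset (Fin d → ℝ)}
    {a : Fin d → ℝ} (ha : a ∈ B) : a ∈ KV V B :=
  subset_affineSpan ℝ _ (Or.inl (Finset.mem_coe.mpr ha))

private lemma KV_nonempty (V : AffineSubspace ℝ (Fin d → ℝ)) (hV : V ≠ ⊥)
    (B : Finset (Fin d → ℝ)) : ((KV V B : Set (Fin d → ℝ))).Nonempty := by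
  obtain ⟨p, hp⟩ := (AffineSubspace.nonempty_iff_ne_bot V).mpr hV
  exact ⟨p, le_KV V B hp⟩

private lemma JD_mono (V : AffineSubspace ℝ (Fin d → ℝ)) {B C : Finset (Fin d → ℝ)}
    (h : B ⊆ C) : JD V B ≤ JD V C :=
  Submodule.finrank_mono (AffineSubspace.direction_le (KV_mono V h))

private lemma JD_le_d (V : AffineSubspace ℝ (Fin d → ℝ)) (B : Finset (Fin d → ℝ)) :
    JD V B ≤ d := by
  simpa [JD, Module.finrank_fin_fun] using
    (Submodule.finrank_le (KV V B).direction)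

private lemma KV_insert (V : AffineSubspace ℝ (Fin d → ℝ)) (B : Finset (Fin d → ℝ))
    (a : Fin d → ℝ) :
    KV V (insert a B) = affineSpan ℝ (insert a ((KV V B : Set (Fin d → ℝ)))) := by
  rw [KV, KV, Finset.coe_insert, Set.insert_union, affineSpan_insert_affineSpan]

private lemma finrank_span_sup_le (v : Fin d → ℝ) (D : Submodule ℝ (Fin d → ℝ)) :
    finrank ℝ ((Submodule.span ℝ {v}) ⊔ D : Submodule ℝ (Fin d → ℝ)) ≤ finrank ℝ D + 1 := by
  have h := Submodule.finrank_sup_add_finrank_inf_eq (Submodule.span ℝ {v}) D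
  have h1 : finrank ℝ (Submodule.span ℝ {v} : Submodule ℝ (Fin d → ℝ)) ≤ 1 := by
    rcases eq_or_ne v 0 with rfl | hv
    · rw [Submodule.span_zero_singleton]; simp
    · rw [finrank_span_singleton hv]
  omega

private lemma JD_insert_le (V : AffineSubspace ℝ (Fin d → ℝ)) (hV : V ≠ ⊥)
    (B : Finset (Fin d → ℝ)) (a : Fin d → ℝ) : JD V (insert a B) ≤ JD V B + 1 := by
  obtain ⟨p, hp⟩ := KV_nonempty V hV B
  rw [JD, KV_insert, AffineSubspace.direction_affineSpan_insert hp]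
  exact finrank_span_sup_le _ _

private lemma JD_le_card (V : AffineSubspace ℝ (Fin d → ℝ)) (hV : V ≠ ⊥)
    (B : Finset (Fin d → ℝ)) : JD V B ≤ finrank ℝ V.direction + B.card := by
  classical
  induction B using Finset.induction_on with
  | empty =>
    show finrank ℝ (KV V ∅).direction ≤ _
    rw [KV_empty]; simp
  | insert a B hx ih =>
    have := JD_insert_le V hV B a
    have hc : (insert a B).card = B.card + 1 := Finset.card_insert_of_notMem hx
    omega


end SimplexAux

noncomputable section SimplexAux2

variable {d : ℕ}

/-- No `d+2` points in a hyperplane implies any flat of smaller dimension contains at most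
`d+1` points of `P`. -/
private lemma flat_card_le (P : Finset (Fin d → ℝ))
    (hGP : ∀ T : Finset (Fin d → ℝ), T ⊆ P → T.card = d + 2 →
      affineSpan ℝ (T : Set (Fin d → ℝ)) = ⊤)
    (W : AffineSubspace ℝ (Fin d → ℝ)) (hW : finrank ℝ W.direction < d)
    (Q : Finset (Fin d → ℝ)) (hQP : Q ⊆ P) (hQW : ∀ b ∈ Q, b ∈ W) :
    Q.card ≤ d + 1 := by
  classical
  by_contra h
  push_neg at h
  obtain ⟨T, hTsub, hTcard⟩ := Finset.exists_subset_card_eq (show d + 2 ≤ _ from h)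
  have hTP : T ⊆ P := hTsub.trans hQP
  have htop := hGP T hTP hTcard
  have hle : affineSpan ℝ (T : Set (Fin d → ℝ)) ≤ W := by
    rw [affineSpan_le]
    intro x hx
    exact hQW x (hTsub hx)
  rw [htop] at hle
  have : W = ⊤ := top_le_iff.mp hle
  rw [this, AffineSubspace.direction_top, finrank_top, Module.finrank_fin_fun] at hW
  omega

private lemma affineSubspace_eq_of_le_of_finrank_le
    {W₁ W₂ : AffineSubspace ℝ (Fin d → ℝ)} (hle : W₁ ≤ W₂)
    (hne : ((W₁ : Set (Fin d → ℝ))).Nonempty)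
    (hrk : finrank ℝ W₂.direction ≤ finrank ℝ W₁.direction) : W₁ = W₂ := by
  have hdir : W₁.direction = W₂.direction :=
    Submodule.eq_of_le_of_finrank_le (AffineSubspace.direction_le hle) hrk
  refine AffineSubspace.ext_of_direction_eq hdir ?_
  obtain ⟨p, hp⟩ := hne
  exact ⟨p, hp, hle hp⟩

/-- The set of `k`-element subsets of `P` which are degenerate with respect to `V`. -/
private def Degset (e : ℕ) (V : AffineSubspace ℝ (Fin d → ℝ)) (P : Finset (Fin d → ℝ))
    (k : ℕ) : Finset (Finset (Fin d → ℝ)) :=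
  (P.powersetCard k).filter (fun B => JD V B < min d (e + k))

private lemma Degset_card (e : ℕ) (V : AffineSubspace ℝ (Fin d → ℝ)) (hV : V ≠ ⊥)
    (hVdim : finrank ℝ V.direction = e)
    (P : Finset (Fin d → ℝ))
    (hGP : ∀ T : Finset (Fin d → ℝ), T ⊆ P → T.card = d + 2 →
      affineSpan ℝ (T : Set (Fin d → ℝ)) = ⊤)
    (k : ℕ) :
    (Degset e V P k).card ≤ (d + 1) * k * P.card ^ (k - 1) := by
  classical
  have hed : e ≤ d := by
    rw [← hVdim]
    simpa [Module.finrank_fin_fun] using Submodule.finrank_le V.direction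
  induction k with
  | zero =>
    have : Degset e V P 0 = ∅ := by
      rw [Finset.eq_empty_iff_forall_notMem]
      intro B hB
      rw [Degset, Finset.mem_filter, Finset.mem_powersetCard] at hB
      obtain ⟨⟨_, hB0⟩, hdeg⟩ := hB
      rw [Finset.card_eq_zero.mp hB0] at hdeg
      have : JD V ∅ = e := by
        show finrank ℝ (KV V ∅).direction = e
        rw [KV_empty]; exact hVdim
      rw [this, Nat.add_zero, min_eq_right hed] at hdeg
      omega
    simp [this]
  | succ k ih =>
    set m := P.card with hm
    set T₁ : Finset (Finset (Fin d → ℝ) × (Fin d → ℝ)) := (Degset e V P k) ×ˢ P with hT₁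
    set T₂ : Finset (Finset (Fin d → ℝ) × (Fin d → ℝ)) :=
      (P.powersetCard k).biUnion (fun B' =>
        (P.filter (fun b => b ∈ KV V B' ∧ finrank ℝ (KV V B').direction < d)).image
          (fun b => (B', b))) with hT₂
    have hsub : Degset e V P (k+1) ⊆ (T₁ ∪ T₂).image (fun p => insert p.2 p.1) := by
      intro B hB
      rw [Degset, Finset.mem_filter, Finset.mem_powersetCard] at hB
      obtain ⟨⟨hBP, hBcard⟩, hdeg⟩ := hB
      by_cases hcase : ∃ b ∈ B, JD V (B.erase b) < min d (e + k)
      · obtain ⟨b, hb, hdb⟩ := hcase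
        refine Finset.mem_image.mpr ⟨(B.erase b, b), ?_, by simp [Finset.insert_erase hb]⟩
        refine Finset.mem_union_left _ (Finset.mem_product.mpr ⟨?_, hBP hb⟩)
        rw [Degset, Finset.mem_filter, Finset.mem_powersetCard]
        exact ⟨⟨(Finset.erase_subset _ _).trans hBP, by rw [Finset.card_erase_of_mem hb]; omega⟩, hdb⟩
      · push_neg at hcase
        have hBne : B.Nonempty := Finset.card_pos.mp (by omega)
        obtain ⟨b, hb⟩ := hBne
        set B' := B.erase b with hB'
        have h1 : min d (e + k) ≤ JD V B' := hcase b hb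
        have h2 : JD V B' ≤ JD V B := JD_mono V (Finset.erase_subset _ _)
        have hlt : e + k < d := by
          by_contra hc
          push_neg at hc
          rw [min_eq_left hc] at h1
          rw [min_eq_left (by omega : d ≤ e + (k+1))] at hdeg
          omega
        rw [min_eq_right hlt.le] at h1
        have h3 : JD V B ≤ e + k := by
          rcases le_or_gt d (e + (k+1)) with hc | hc
          · rw [min_eq_left hc] at hdeg; omega
          · rw [min_eq_right hc.le] at hdeg; omega
        have hJB' : finrank ℝ (KV V B').direction < d := lt_of_le_of_lt (h2.trans h3) hlt
        have hKeq : KV V B' = KV V B :=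
          affineSubspace_eq_of_le_of_finrank_le (KV_mono V (Finset.erase_subset _ _))
            (KV_nonempty V hV B') (h3.trans h1)
        have hbK : b ∈ KV V B' := by rw [hKeq]; exact mem_KV_of_mem V hb
        refine Finset.mem_image.mpr ⟨(B', b), ?_, by simp [hB', Finset.insert_erase hb]⟩
        refine Finset.mem_union_right _ (Finset.mem_biUnion.mpr ⟨B', ?_, ?_⟩)
        · rw [Finset.mem_powersetCard]
          exact ⟨(Finset.erase_subset _ _).trans hBP, by rw [hB', Finset.card_erase_of_mem hb]; omega⟩
        · exact Finset.mem_image.mpr ⟨b, Finset.mem_filter.mpr ⟨hBP hb, hbK, hJB'⟩, rfl⟩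
    have hc1 : (Degset e V P (k+1)).card ≤ T₁.card + T₂.card :=
      (Finset.card_le_card hsub).trans ((Finset.card_image_le).trans (Finset.card_union_le _ _))
    have hcT₁ : T₁.card = (Degset e V P k).card * m := by rw [hT₁, Finset.card_product]
    have hcT₂ : T₂.card ≤ m ^ k * (d + 1) := by
      refine (Finset.card_biUnion_le).trans ?_
      have hbound : ∀ B' ∈ P.powersetCard k,
          ((P.filter (fun b => b ∈ KV V B' ∧ finrank ℝ (KV V B').direction < d)).image
            (fun b => (B', b))).card ≤ d + 1 := by
        intro B' _
        refine Finset.card_image_le.trans ?_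
        by_cases hr : finrank ℝ (KV V B').direction < d
        · exact flat_card_le P hGP (KV V B') hr _ (Finset.filter_subset _ _)
            (fun b hb => (Finset.mem_filter.mp hb).2.1)
        · have : (P.filter (fun b => b ∈ KV V B' ∧ finrank ℝ (KV V B').direction < d)) = ∅ := by
            rw [Finset.filter_eq_empty_iff]
            intro b _ hbmem
            exact hr hbmem.2
          simp [this]
      calc ∑ B' ∈ P.powersetCard k, ((P.filter (fun b => b ∈ KV V B' ∧
              finrank ℝ (KV V B').direction < d)).image (fun b => (B', b))).card
          ≤ ∑ _B' ∈ P.powersetCard k, (d + 1) := Finset.sum_le_sum hbound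
        _ = (P.powersetCard k).card * (d + 1) := by rw [Finset.sum_const, smul_eq_mul]
        _ ≤ m ^ k * (d + 1) := by
            apply Nat.mul_le_mul_right
            rw [Finset.card_powersetCard]
            exact Nat.choose_le_pow m k
    have hih : (Degset e V P k).card * m ≤ (d + 1) * k * m ^ k := by
      calc (Degset e V P k).card * m ≤ ((d + 1) * k * m ^ (k-1)) * m :=
            Nat.mul_le_mul_right m ih
        _ ≤ (d + 1) * k * m ^ k := by
            rcases Nat.eq_zero_or_pos k with rfl | hk
            · simp
            · have : m ^ (k - 1) * m = m ^ k := by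
                rw [← pow_succ]; congr 1; omega
              rw [Nat.mul_assoc, this]
    calc (Degset e V P (k+1)).card ≤ T₁.card + T₂.card := hc1
      _ ≤ (d + 1) * k * m ^ k + m ^ k * (d + 1) := by
          rw [hcT₁]; exact Nat.add_le_add hih hcT₂
      _ = (d + 1) * (k + 1) * m ^ (k + 1 - 1) := by rw [Nat.add_sub_cancel]; ring
    
end SimplexAux2

noncomputable section ClaimG

variable {d : ℕ}

private lemma range_coe_finset (A : Finset (Fin d → ℝ)) :
    Set.range (fun a : {y // y ∈ A} => (a : Fin d → ℝ)) = (A : Set (Fin d → ℝ)) := by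
  rw [Subtype.range_coe_subtype]
  exact Finset.setOf_mem

private lemma claimG (jj : ℕ) (hj1 : 1 ≤ jj) (hjd : jj + 1 ≤ d)
    (V : AffineSubspace ℝ (Fin d → ℝ)) (hV : V ≠ ⊥)
    (hVdim : finrank ℝ V.direction = d - jj)
    (A : Finset (Fin d → ℝ)) (hA : A.card = jj + 1)
    (hne : (convexHull ℝ (A : Set (Fin d → ℝ)) ∩ (V : Set (Fin d → ℝ))).Nonempty)
    (hnd : ∀ B ⊆ A, min d (d - jj + B.card) ≤ JD V B) :
    ∃ x, convexHull ℝ (A : Set (Fin d → ℝ)) ∩ (V : Set (Fin d → ℝ)) = {x} ∧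
      x ∈ intrinsicInterior ℝ (convexHull ℝ (A : Set (Fin d → ℝ))) := by
  classical
  set e : ℕ := d - jj with hedef
  have he : e + jj = d := Nat.sub_add_cancel (by omega)
  -- dimension bound for joins through a common point
  have dimle : ∀ B : Finset (Fin d → ℝ), ∀ x : Fin d → ℝ,
      x ∈ affineSpan ℝ (B : Set (Fin d → ℝ)) → x ∈ V →
      JD V B ≤ finrank ℝ (vectorSpan ℝ (B : Set (Fin d → ℝ))) + e := by
    intro B x hx1 hx2
    have hdir : (KV V B).direction
        = vectorSpan ℝ (B : Set (Fin d → ℝ)) ⊔ V.direction := by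
      rw [KV_eq_sup, AffineSubspace.direction_sup hx1 hx2]
      simp [vsub_self, Submodule.span_zero_singleton, direction_affineSpan]
    have hsum := Submodule.finrank_sup_add_finrank_inf_eq
      (vectorSpan ℝ (B : Set (Fin d → ℝ))) V.direction
    have : JD V B = finrank ℝ
        ((vectorSpan ℝ (B : Set (Fin d → ℝ)) ⊔ V.direction : Submodule ℝ (Fin d → ℝ))) := by
      rw [JD, hdir]
    omega
  -- no small face of `A` meets `V`
  have facet : ∀ B : Finset (Fin d → ℝ), B ⊆ A → B.card ≤ jj → ∀ x : Fin d → ℝ,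
      x ∈ affineSpan ℝ (B : Set (Fin d → ℝ)) → x ∈ V → False := by
    intro B hBA hBc x hx1 hx2
    have hBne : B.Nonempty := by
      rcases B.eq_empty_or_nonempty with rfl | h
      · rw [Finset.coe_empty, AffineSubspace.span_empty] at hx1
        exact (AffineSubspace.notMem_bot _ _ x hx1).elim
      · exact h
    have hcpos : 1 ≤ B.card := hBne.card_pos
    have hvs : finrank ℝ (vectorSpan ℝ (B : Set (Fin d → ℝ))) ≤ B.card - 1 := by
      have hc : B.card = (B.card - 1) + 1 := by omega
      have h' := finrank_vectorSpan_image_finset_le ℝ id B hc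
      rwa [Finset.image_id] at h'
    have h1 := dimle B x hx1 hx2
    have h2 := hnd B hBA
    rw [min_eq_right (by omega : e + B.card ≤ d)] at h2
    omega
  -- affine independence of `A`
  have hind : AffineIndependent ℝ (fun a : {y // y ∈ A} => (a : Fin d → ℝ)) := by
    by_contra hdep
    obtain ⟨x, hxc, hxV⟩ := hne
    have hxs : x ∈ affineSpan ℝ (A : Set (Fin d → ℝ)) :=
      convexHull_subset_affineSpan _ hxc
    have hvs : finrank ℝ (vectorSpan ℝ (A : Set (Fin d → ℝ))) ≤ jj - 1 := by
      have hc : Fintype.card {y // y ∈ A} = (jj - 1) + 2 := by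
        rw [Fintype.card_coe]; omega
      have := (finrank_vectorSpan_le_iff_not_affineIndependent ℝ
        (fun a : {y // y ∈ A} => (a : Fin d → ℝ)) hc).mpr hdep
      rwa [range_coe_finset] at this
    have h1 := dimle A x hxs hxV
    have h2 := hnd A (Finset.Subset.refl A)
    rw [hA, min_eq_left (by omega : d ≤ e + (jj + 1))] at h2
    omega
  obtain ⟨x, hxc, hxV⟩ := hne
  have hAsp : x ∈ affineSpan ℝ (A : Set (Fin d → ℝ)) := convexHull_subset_affineSpan _ hxc
  -- barycentric weights
  have hxw : x ∈ {z : Fin d → ℝ | ∃ w : (Fin d → ℝ) → ℝ, (∀ y ∈ A, 0 ≤ w y) ∧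
      ∑ y ∈ A, w y = 1 ∧ A.centerMass w id = z} := by
    rw [← Finset.convexHull_eq]; exact hxc
  obtain ⟨w, hw0, hw1, hwx⟩ := hxw
  have hwpos : ∀ a ∈ A, 0 < w a := by
    intro a ha
    rcases (hw0 a ha).lt_or_eq with h | h
    · exact h
    · exfalso
      have hzero : ∀ i ∈ A, i ∉ A.erase a → w i = 0 := by
        intro i hiA hiE
        have : i = a := by
          by_contra hia
          exact hiE (Finset.mem_erase.mpr ⟨hia, hiA⟩)
        rw [this, ← h]
      have hxe : x ∈ convexHull ℝ ((A.erase a : Finset (Fin d → ℝ)) : Set (Fin d → ℝ)) := by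
        rw [Finset.convexHull_eq]
        refine ⟨w, fun y hy => hw0 y (Finset.mem_of_mem_erase hy), ?_, ?_⟩
        · rw [Finset.sum_erase_eq_sub ha, hw1, ← h, sub_zero]
        · rw [Finset.centerMass_subset id (Finset.erase_subset a A) hzero]
          exact hwx
      exact facet (A.erase a) (Finset.erase_subset _ _)
        (by rw [Finset.card_erase_of_mem ha, hA]; omega) x
        (convexHull_subset_affineSpan _ hxe) hxV
  -- dimension of the whole configuration
  have hJDA : JD V A = d := by
    have h1 := JD_le_d V A
    have h2 := hnd A (Finset.Subset.refl A)
    rw [hA, min_eq_left (by omega : d ≤ e + (jj + 1))] at h2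
    omega
  have hvsA : finrank ℝ (vectorSpan ℝ (A : Set (Fin d → ℝ))) = jj := by
    have hc : Fintype.card {y // y ∈ A} = jj + 1 := by rw [Fintype.card_coe]; exact hA
    have := hind.finrank_vectorSpan hc
    rwa [range_coe_finset] at this
  have hinf : vectorSpan ℝ (A : Set (Fin d → ℝ)) ⊓ V.direction = ⊥ := by
    have hdir : (KV V A).direction
        = vectorSpan ℝ (A : Set (Fin d → ℝ)) ⊔ V.direction := by
      rw [KV_eq_sup, AffineSubspace.direction_sup hAsp hxV]
      simp [vsub_self, Submodule.span_zero_singleton, direction_affineSpan]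
    have hsup : finrank ℝ
        ((vectorSpan ℝ (A : Set (Fin d → ℝ)) ⊔ V.direction : Submodule ℝ (Fin d → ℝ))) = d := by
      rw [← hdir]; exact hJDA
    have hsum := Submodule.finrank_sup_add_finrank_inf_eq
      (vectorSpan ℝ (A : Set (Fin d → ℝ))) V.direction
    have hz : finrank ℝ
        ((vectorSpan ℝ (A : Set (Fin d → ℝ)) ⊓ V.direction : Submodule ℝ (Fin d → ℝ))) = 0 := by
      omega
    exact Submodule.finrank_eq_zero.mp hz
  have huniq : convexHull ℝ (A : Set (Fin d → ℝ)) ∩ (V : Set (Fin d → ℝ)) = {x} := by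
    refine Set.eq_singleton_iff_unique_mem.mpr ⟨⟨hxc, hxV⟩, ?_⟩
    rintro y ⟨hyc, hyV⟩
    have h1 : y -ᵥ x ∈ vectorSpan ℝ (A : Set (Fin d → ℝ)) := by
      rw [← direction_affineSpan]
      exact AffineSubspace.vsub_mem_direction (convexHull_subset_affineSpan _ hyc) hAsp
    have h2 : y -ᵥ x ∈ V.direction := AffineSubspace.vsub_mem_direction hyV hxV
    have hb : y -ᵥ x ∈ (⊥ : Submodule ℝ (Fin d → ℝ)) := by
      rw [← hinf]; exact Submodule.mem_inf.mpr ⟨h1, h2⟩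
    have := (Submodule.mem_bot ℝ).mp hb
    have : y = x := by
      have := vsub_eq_zero_iff_eq.mp this
      exact this
    exact this
  -- the intrinsic interior statement
  refine ⟨x, huniq, ?_⟩
  set W' : AffineSubspace ℝ (Fin d → ℝ) :=
    affineSpan ℝ (convexHull ℝ (A : Set (Fin d → ℝ))) with hW'
  have hWA : affineSpan ℝ (A : Set (Fin d → ℝ)) = W' := (affineSpan_convexHull _).symm
  haveI hWne : Nonempty ↥W' := ⟨⟨x, subset_affineSpan ℝ _ hxc⟩⟩
  set xt : ↥W' := ⟨x, subset_affineSpan ℝ _ hxc⟩ with hxt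
  have hmemW : ∀ a : {y // y ∈ A}, (a : Fin d → ℝ) ∈ W' := by
    intro a
    rw [← hWA]
    exact subset_affineSpan ℝ _ (Finset.mem_coe.mpr a.2)
  set lift : {y // y ∈ A} → ↥W' := fun a => ⟨a, hmemW a⟩ with hlift
  set ψ : ↥W' ≃ᵃⁱ[ℝ] ↥W'.direction := AffineIsometryEquiv.constVSub ℝ xt with hψ
  set g : ↥W'.direction →ᵃ[ℝ] (Fin d → ℝ) :=
    W'.subtype.comp ψ.symm.toAffineEquiv.toAffineMap with hgdef
  have hg : ∀ z : ↥W', g (ψ z) = (z : Fin d → ℝ) := by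
    intro z
    simp [hgdef, AffineSubspace.subtype_apply]
  have hginj : Function.Injective g := by
    intro u v huv
    have : (ψ.symm u : Fin d → ℝ) = (ψ.symm v : Fin d → ℝ) := huv
    exact ψ.symm.injective (Subtype.ext this)
  set c : {y // y ∈ A} → ↥W'.direction := fun a => ψ (lift a) with hc
  have hgc : ∀ a : {y // y ∈ A}, g (c a) = (a : Fin d → ℝ) := fun a => hg (lift a)
  have hgccomp : ⇑g ∘ c = (fun a : {y // y ∈ A} => (a : Fin d → ℝ)) := funext hgc
  have hindc : AffineIndependent ℝ c :=
    AffineIndependent.of_comp g (by rw [hgccomp]; exact hind)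
  have hrangelift : Subtype.val '' Set.range lift = (A : Set (Fin d → ℝ)) := by
    have hcomp : Subtype.val ∘ lift = (fun a : {y // y ∈ A} => (a : Fin d → ℝ)) := rfl
    rw [← Set.range_comp, hcomp, range_coe_finset]
  have hliftspan : affineSpan ℝ (Set.range lift) = (⊤ : AffineSubspace ℝ ↥W') := by
    have hmap : (affineSpan ℝ (Set.range lift)).map W'.subtype = W' := by
      rw [AffineSubspace.map_span, AffineSubspace.coe_subtype, hrangelift, hWA]
    rw [eq_top_iff]
    rintro y -
    have hy : (y : Fin d → ℝ) ∈ AffineSubspace.map W'.subtype (affineSpan ℝ (Set.range lift)) := by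
      rw [hmap]; exact y.2
    rw [AffineSubspace.mem_map] at hy
    obtain ⟨z, hz, hzy⟩ := hy
    have hzy' : z = y := Subtype.ext (by simpa [AffineSubspace.subtype_apply] using hzy)
    rwa [← hzy']
  have htotc : affineSpan ℝ (Set.range c) = ⊤ := by
    have hrc : Set.range c = ⇑(ψ.toAffineEquiv.toAffineMap) '' Set.range lift := by
      rw [← Set.range_comp]; rfl
    rw [hrc, ← AffineSubspace.map_span, hliftspan]
    exact AffineMap.map_top_of_surjective _
      (fun u => ⟨ψ.symm u, by simp⟩)
  set b : AffineBasis {y // y ∈ A} ℝ ↥W'.direction := ⟨c, hindc, htotc⟩ with hb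
  set w' : {y // y ∈ A} → ℝ := fun a => w a.1 with hw'
  have hw'1 : ∑ a ∈ Finset.univ, w' a = 1 := by
    rw [hw']
    rw [Finset.sum_coe_sort A w]
    exact hw1
  have hcomb : Finset.univ.affineCombination ℝ
      (fun a : {y // y ∈ A} => (a : Fin d → ℝ)) w' = x := by
    rw [affineCombination_eq_centerMass hw'1, ← hwx]
    simp only [Finset.centerMass]
    rw [Finset.sum_coe_sort A w]
    have hs2 : ∑ i : {y // y ∈ A}, w' i • ((i : Fin d → ℝ)) =
        ∑ i ∈ A, w i • (id i) := Finset.sum_finset_coe (fun z => w z • (id z)) A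
    rw [hs2]
  have hψx : ψ xt = Finset.univ.affineCombination ℝ c w' := by
    apply hginj
    rw [hg xt, Finset.map_affineCombination _ c w' hw'1 g, hgccomp, hcomb]
  have hcoord : ∀ i, 0 < b.coord i (ψ xt) := by
    intro i
    rw [hψx]
    rw [show Finset.univ.affineCombination ℝ c w'
      = Finset.univ.affineCombination ℝ ⇑b w' from rfl]
    rw [AffineBasis.coord_apply_combination_of_mem b (Finset.mem_univ i) hw'1]
    exact hwpos i.1 i.2
  have hgimg : ⇑g '' (convexHull ℝ (Set.range c)) = convexHull ℝ (A : Set (Fin d → ℝ)) := by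
    rw [AffineMap.image_convexHull, ← Set.range_comp, hgccomp, range_coe_finset]
  have hTset : ⇑ψ '' (Subtype.val ⁻¹' (convexHull ℝ (A : Set (Fin d → ℝ))) : Set ↥W')
      = convexHull ℝ (Set.range c) := by
    ext u
    constructor
    · rintro ⟨y, hy, rfl⟩
      rw [← hgimg] at hy
      obtain ⟨z, hz, hzy⟩ := hy
      have h1 : (ψ.symm z : Fin d → ℝ) = (y : Fin d → ℝ) := hzy
      have h2 : ψ.symm z = y := Subtype.ext h1
      rw [← h2, AffineIsometryEquiv.apply_symm_apply]
      exact hz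
    · intro hu
      refine ⟨ψ.symm u, ?_, AffineIsometryEquiv.apply_symm_apply ψ u⟩
      show (ψ.symm u : Fin d → ℝ) ∈ convexHull ℝ (A : Set (Fin d → ℝ))
      rw [← hgimg]
      exact ⟨u, hu, rfl⟩
  have hInt : xt ∈ interior (Subtype.val ⁻¹' (convexHull ℝ (A : Set (Fin d → ℝ))) : Set ↥W') := by
    have h1 : ψ xt ∈ interior (convexHull ℝ (Set.range ⇑b)) := by
      rw [b.interior_convexHull]
      exact hcoord
    have hrb : Set.range ⇑b = Set.range c := rfl
    rw [hrb, ← hTset] at h1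
    have h2 : ψ xt ∈ ⇑(ψ.toHomeomorph) ''
        interior (Subtype.val ⁻¹' (convexHull ℝ (A : Set (Fin d → ℝ))) : Set ↥W') := by
      rw [Homeomorph.image_interior]
      exact h1
    obtain ⟨z, hz, hzx⟩ := h2
    have : z = xt := ψ.injective hzx
    rwa [← this]
  rw [mem_intrinsicInterior]
  exact ⟨xt, hInt, rfl⟩

end ClaimG



/-- Let `P ⊂ ℝ^d` (`d ≥ 3`) be a set of `n/r` points with no `d+2`
of them in a hyperplane, `V` an affine subspace of dimension `d-j` (`1 ≤ j ≤ d-1`),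
and `S` a family of `α·n^{j+1}/r^{j+1}` many `(j+1)`-subsets of `P` whose convex
hulls all meet `V`. Then there is `c_α` depending only on `α, d, j` such that if
`n ≥ c_α·r`, at least `α·n^{j+1}/(2r^{j+1})` of the members of `S` have convex
hulls meeting `V` in exactly one point, lying in their relative interior. -/
theorem many_simplices_meet_once (d j : ℕ) (hd : 3 ≤ d) (hj1 : 1 ≤ j) (hjd : j ≤ d - 1)
    (α : ℝ) (hα : 0 < α) :
    ∃ cα : ℝ, ∀ (n r : ℝ), 0 < r → cα * r ≤ n →
      ∀ (P : Finset (Fin d → ℝ)), (P.card : ℝ) = n / r →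
      (∀ T : Finset (Fin d → ℝ), T ⊆ P → T.card = d + 2 →
        affineSpan ℝ (T : Set (Fin d → ℝ)) = ⊤) →
      ∀ (V : AffineSubspace ℝ (Fin d → ℝ)), V ≠ ⊥ →
        Module.finrank ℝ V.direction = d - j →
      ∀ (S : Finset (Finset (Fin d → ℝ))),
        (∀ A ∈ S, A ⊆ P ∧ A.card = j + 1 ∧
          (convexHull ℝ (A : Set (Fin d → ℝ)) ∩ (V : Set (Fin d → ℝ))).Nonempty) →
        (S.card : ℝ) = α * n ^ (j + 1) / r ^ (j + 1) →
      α * n ^ (j + 1) / (2 * r ^ (j + 1))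
        ≤ ({A : Finset (Fin d → ℝ) | A ∈ S ∧ ∃ x : Fin d → ℝ,
              convexHull ℝ (A : Set (Fin d → ℝ)) ∩ (V : Set (Fin d → ℝ)) = {x} ∧
              x ∈ intrinsicInterior ℝ (convexHull ℝ (A : Set (Fin d → ℝ)))}.ncard : ℝ) := by
  classical
  set Kn : ℕ := (d + 1) * (j + 1) * (j + 2) with hKn
  refine ⟨max (2 * Kn / α) 1, ?_⟩
  intro n r hr hcn P hPcard hGP V hVbot hVdim S hS hScard
  set m : ℕ := P.card with hm
  have hM : (m : ℝ) = n / r := hPcard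
  have hMge : max (2 * (Kn:ℝ) / α) 1 ≤ (m : ℝ) := by
    rw [hM, le_div_iff₀ hr]
    exact hcn
  have hMpos : (0 : ℝ) < (m : ℝ) := lt_of_lt_of_le zero_lt_one ((le_max_right _ _).trans hMge)
  set Φ : Finset (Fin d → ℝ) → Prop := fun A => ∃ x : Fin d → ℝ,
      convexHull ℝ (A : Set (Fin d → ℝ)) ∩ (V : Set (Fin d → ℝ)) = {x} ∧
      x ∈ intrinsicInterior ℝ (convexHull ℝ (A : Set (Fin d → ℝ))) with hΦ
  set Bad : Finset (Finset (Fin d → ℝ)) := S.filter (fun A => ¬ Φ A) with hBadDef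
  -- every bad tuple contains a degenerate subset
  have hBad : Bad ⊆ (Finset.range (j + 2)).biUnion (fun k =>
      ((Degset (d - j) V P k) ×ˢ (P.powersetCard (j + 1 - k))).image
        (fun p => p.1 ∪ p.2)) := by
    intro A hA
    rw [hBadDef, Finset.mem_filter] at hA
    obtain ⟨hAS, hnΦ⟩ := hA
    obtain ⟨hAP, hAcard, hAne⟩ := hS A hAS
    have hex : ∃ B, B ⊆ A ∧ JD V B < min d (d - j + B.card) := by
      by_contra hno
      push_neg at hno
      exact hnΦ (claimG j hj1 (by omega) V hVbot hVdim A hAcard hAne hno)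
    obtain ⟨B, hBA, hBdeg⟩ := hex
    have hBcard : B.card ≤ j + 1 := by
      have := Finset.card_le_card hBA
      omega
    refine Finset.mem_biUnion.mpr ⟨B.card, Finset.mem_range.mpr (by omega), ?_⟩
    refine Finset.mem_image.mpr ⟨(B, A \ B), Finset.mem_product.mpr ⟨?_, ?_⟩, ?_⟩
    · rw [Degset, Finset.mem_filter, Finset.mem_powersetCard]
      exact ⟨⟨hBA.trans hAP, rfl⟩, hBdeg⟩
    · rw [Finset.mem_powersetCard]
      refine ⟨Finset.sdiff_subset.trans hAP, ?_⟩
      rw [Finset.card_sdiff_of_subset hBA, hAcard]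
    · exact Finset.union_sdiff_of_subset hBA
  have hBadcard : Bad.card ≤ Kn * m ^ j := by
    refine (Finset.card_le_card hBad).trans (Finset.card_biUnion_le.trans ?_)
    have hterm : ∀ k ∈ Finset.range (j + 2),
        (((Degset (d - j) V P k) ×ˢ (P.powersetCard (j + 1 - k))).image
          (fun p : Finset (Fin d → ℝ) × Finset (Fin d → ℝ) => p.1 ∪ p.2)).card
          ≤ (d + 1) * (j + 1) * m ^ j := by
      intro k hk
      rw [Finset.mem_range] at hk
      refine Finset.card_image_le.trans ?_
      rw [Finset.card_product]
      have h1 : (Degset (d - j) V P k).card ≤ (d + 1) * k * m ^ (k - 1) :=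
        Degset_card (d - j) V hVbot hVdim P hGP k
      have h2 : (P.powersetCard (j + 1 - k)).card ≤ m ^ (j + 1 - k) := by
        rw [Finset.card_powersetCard]
        exact Nat.choose_le_pow _ _
      refine (Nat.mul_le_mul h1 h2).trans ?_
      rcases Nat.eq_zero_or_pos k with rfl | hkpos
      · simp
      · have hpe : m ^ (k - 1) * m ^ (j + 1 - k) = m ^ j := by
          rw [← pow_add]
          congr 1
          omega
        calc (d + 1) * k * m ^ (k - 1) * m ^ (j + 1 - k)
            = (d + 1) * k * (m ^ (k - 1) * m ^ (j + 1 - k)) := by ring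
          _ = (d + 1) * k * m ^ j := by rw [hpe]
          _ ≤ (d + 1) * (j + 1) * m ^ j := by
              have : k ≤ j + 1 := by omega
              exact Nat.mul_le_mul_right _ (Nat.mul_le_mul_left _ this)
    refine (Finset.sum_le_sum hterm).trans ?_
    rw [Finset.sum_const, Finset.card_range, smul_eq_mul, hKn]
    exact le_of_eq (by ring)
  -- translate to the real inequality
  have hgoalset : {A : Finset (Fin d → ℝ) | A ∈ S ∧ Φ A}.ncard = (S.filter Φ).card := by
    rw [← Set.ncard_coe_finset]
    congr 1
    ext A
    simp [Finset.mem_filter]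
  have hsplit : (S.filter Φ).card + Bad.card = S.card := by
    rw [hBadDef]
    exact Finset.card_filter_add_card_filter_not _
  have hScardR : (S.card : ℝ) = α * (m : ℝ) ^ (j + 1) := by
    rw [hScard, hM, div_pow, mul_div_assoc]
  have hLHS : α * n ^ (j + 1) / (2 * r ^ (j + 1)) = α * (m : ℝ) ^ (j + 1) / 2 := by
    have hrp : r ^ (j + 1) ≠ 0 := pow_ne_zero _ (ne_of_gt hr)
    rw [hM, div_pow]
    field_simp
  have hBadR : (Bad.card : ℝ) ≤ (Kn : ℝ) * (m : ℝ) ^ j := by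
    have := hBadcard
    exact_mod_cast Nat.cast_le.mpr this |>.trans (by push_cast; exact le_refl _)
  have hMK : 2 * (Kn : ℝ) ≤ α * (m : ℝ) := by
    have h := (le_max_left (2 * (Kn:ℝ) / α) 1).trans hMge
    rw [div_le_iff₀ hα] at h
    linarith [h]
  have hpowj : (0 : ℝ) ≤ (m : ℝ) ^ j := pow_nonneg (Nat.cast_nonneg m) j
  have hKM : (Kn : ℝ) * (m : ℝ) ^ j ≤ α * (m : ℝ) ^ (j + 1) / 2 := by
    rw [pow_succ]
    nlinarith [hMK, hpowj]
  have hGoodR : (S.card : ℝ) - (Bad.card : ℝ) = ((S.filter Φ).card : ℝ) := by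
    rw [← hsplit]
    push_cast
    ring
  rw [hgoalset, hLHS]
  rw [← hGoodR, hScardR]
  linarith [hBadR, hKM]
end

section
/- Let A be a (j+1)-element subset of R^d whose convex hull intersects an affine subspace V in more than one point, or intersects V in a point of its relative boundary. Then there exists a j-element subset of A whose convex hull intersects V. -/
open Finset Set

lemma aux_zero {d : ℕ} (A : Finset (Fin d → ℝ)) (w : (Fin d → ℝ) → ℝ)
    (hw0 : ∀ a ∈ A, 0 ≤ w a) (hw1 : ∑ a ∈ A, w a = 1) {a0 : Fin d → ℝ}
    (h0 : w a0 = 0) :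
    A.centerMass w id ∈ convexHull ℝ ((A.erase a0 : Finset (Fin d → ℝ)) : Set (Fin d → ℝ)) := by
  have hsum' : ∑ a ∈ A.erase a0, w a = 1 := by
    rw [Finset.sum_erase _ h0]; exact hw1
  have hEq : A.centerMass w id = (A.erase a0).centerMass w id := by
    rw [Finset.centerMass_eq_of_sum_1 _ _ hw1, Finset.centerMass_eq_of_sum_1 _ _ hsum']
    exact (Finset.sum_erase _ (by rw [h0, zero_smul])).symm
  rw [hEq]
  exact Finset.centerMass_mem_convexHull _ (fun a ha => hw0 a (Finset.mem_of_mem_erase ha))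
    (by rw [hsum']; norm_num) (fun a ha => Finset.mem_coe.mpr ha)

lemma aux_interior {d : ℕ} (A : Finset (Fin d → ℝ))
    (hindep : AffineIndependent ℝ (fun x : A => (x : Fin d → ℝ)))
    (w : (Fin d → ℝ) → ℝ) (hw1 : ∑ a ∈ A, w a = 1) (hpos : ∀ a ∈ A, 0 < w a)
    {x : Fin d → ℝ} (hx : x = A.centerMass w id) :
    x ∈ intrinsicInterior ℝ (convexHull ℝ (A : Set (Fin d → ℝ))) := by
  classical
  have hxS : x ∈ convexHull ℝ (A : Set (Fin d → ℝ)) := by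
    rw [hx]
    exact A.centerMass_mem_convexHull (fun a ha => (hpos a ha).le) (by rw [hw1]; norm_num)
      (fun i hi => Finset.mem_coe.mpr hi)
  set E := affineSpan ℝ (convexHull ℝ (A : Set (Fin d → ℝ))) with hE
  haveI : Nonempty E := ⟨⟨x, subset_affineSpan ℝ _ hxS⟩⟩
  have hmemE : ∀ a ∈ A, (a : Fin d → ℝ) ∈ E :=
    fun a ha => subset_affineSpan ℝ _ (subset_convexHull ℝ _ ha)
  let p : ↥A → E := fun a => ⟨(a : Fin d → ℝ), hmemE a a.2⟩
  have hpind : AffineIndependent ℝ p := AffineIndependent.of_comp E.subtype hindep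
  have himg : Set.range (⇑E.subtype ∘ p) = (A : Set (Fin d → ℝ)) := by
    ext z
    constructor
    · rintro ⟨a, rfl⟩; exact a.2
    · intro hz; exact ⟨⟨z, hz⟩, rfl⟩
  have hptot : affineSpan ℝ (Set.range p) = ⊤ := by
    refine top_unique ?_
    rintro q -
    have hq : (q : Fin d → ℝ) ∈ affineSpan ℝ (A : Set (Fin d → ℝ)) := by
      have h2 : (q : Fin d → ℝ) ∈ affineSpan ℝ (convexHull ℝ (A : Set (Fin d → ℝ))) := q.2
      rwa [affineSpan_convexHull] at h2
    have hmem : (q : Fin d → ℝ) ∈ (affineSpan ℝ (Set.range p)).map E.subtype := by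
      rw [AffineSubspace.map_span, ← Set.range_comp, himg]
      exact hq
    obtain ⟨r, hr, hrq⟩ := hmem
    have : r = q := Subtype.coe_injective hrq
    rwa [this] at hr
  let b : AffineBasis ↥A ℝ E := ⟨p, hpind, hptot⟩
  set x' : E := ⟨x, subset_affineSpan ℝ _ hxS⟩ with hx'
  have hwsum : ∑ a : ↥A, w ↑a = 1 := by rw [Finset.sum_coe_sort A w]; exact hw1
  have hxcomb : x' = Finset.univ.affineCombination ℝ ⇑b (fun a : ↥A => w ↑a) := by
    apply Subtype.coe_injective
    show x = ((Finset.univ.affineCombination ℝ ⇑b (fun a : ↥A => w ↑a) : ↥E) : Fin d → ℝ)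
    have h1 := Finset.univ.map_affineCombination ⇑b (fun a : ↥A => w ↑a) hwsum E.subtype
    have h2 : ⇑E.subtype ∘ ⇑b = fun a : ↥A => (↑a : Fin d → ℝ) := rfl
    have h3 : (↑(Finset.univ.affineCombination ℝ ⇑b fun a : ↥A => w ↑a) : Fin d → ℝ)
        = Finset.univ.affineCombination ℝ (fun a : ↥A => (↑a : Fin d → ℝ)) (fun a : ↥A => w ↑a) := by
      rw [← h2, ← h1]; rfl
    rw [h3, Finset.affineCombination_eq_linear_combination _ _ _ hwsum]
    show x = ∑ a : ↥A, w ↑a • (↑a : Fin d → ℝ)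
    rw [Finset.sum_coe_sort A (fun a => w a • a), hx, Finset.centerMass_eq_of_sum_1 _ _ hw1]
    simp [id]
  have hxU : ∀ a : ↥A, 0 < b.coord a x' := by
    intro a
    rw [hxcomb, b.coord_apply_combination_of_mem (Finset.mem_univ a) hwsum]
    exact hpos _ a.2
  have hopen : IsOpen {q : E | ∀ a : ↥A, 0 < b.coord a q} := by
    have hEq : {q : E | ∀ a : ↥A, 0 < b.coord a q} = ⋂ a : ↥A, (b.coord a) ⁻¹' Set.Ioi 0 := by
      ext q; simp
    rw [hEq]
    have hc := fun a => continuous_barycentric_coord (𝕜 := ℝ) (E := E.direction) (P := E) b a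
    exact isOpen_iInter_of_finite fun a => (hc a).isOpen_preimage _ isOpen_Ioi
  have hsub : {q : E | ∀ a : ↥A, 0 < b.coord a q} ⊆
      (Subtype.val) ⁻¹' (convexHull ℝ (A : Set (Fin d → ℝ))) := by
    intro q hq
    have hsum1 : ∑ a : ↥A, b.coord a q = 1 := b.sum_coord_apply_eq_one q
    have hqc : q = Finset.univ.affineCombination ℝ ⇑b (fun a => b.coord a q) :=
      (b.affineCombination_coord_eq_self q).symm
    have h1 := Finset.univ.map_affineCombination ⇑b (fun a : ↥A => b.coord a q) hsum1 E.subtype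
    have hval : (q : Fin d → ℝ) = ∑ a : ↥A, b.coord a q • (↑a : Fin d → ℝ) := by
      conv_lhs => rw [hqc]
      have h2 : ⇑E.subtype ∘ ⇑b = fun a : ↥A => (↑a : Fin d → ℝ) := rfl
      have h3 : (↑(Finset.univ.affineCombination ℝ ⇑b fun a : ↥A => b.coord a q) : Fin d → ℝ)
          = Finset.univ.affineCombination ℝ (fun a : ↥A => (↑a : Fin d → ℝ))
            (fun a : ↥A => b.coord a q) := by
        rw [← h2, ← h1]; rfl
      rw [h3, Finset.affineCombination_eq_linear_combination _ _ _ hsum1]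
    show (q : Fin d → ℝ) ∈ convexHull ℝ (A : Set (Fin d → ℝ))
    rw [hval]
    have hmem := Finset.centerMass_mem_convexHull (Finset.univ : Finset ↥A)
      (w := fun a => b.coord a q) (z := fun a : ↥A => (↑a : Fin d → ℝ))
      (fun a _ => (hq a).le) (by rw [hsum1]; norm_num) (fun a _ => a.2)
    rwa [Finset.centerMass_eq_of_sum_1 _ _ hsum1] at hmem
  exact ⟨x', interior_maximal hsub hopen hxU, rfl⟩




/-- if the convex hull of a `(j+1)`-element affinely independent set
`A ⊂ ℝ^d` meets an affine subspace `V` in more than one point, or meets it in a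
point of its relative boundary, then some `j`-element subset of `A` has its
convex hull meeting `V`. -/
theorem facet_meets_affine_subspace (d j : ℕ) (A : Finset (Fin d → ℝ))
    (hcard : A.card = j + 1)
    (hindep : AffineIndependent ℝ (fun x : A => (x : Fin d → ℝ)))
    (V : AffineSubspace ℝ (Fin d → ℝ))
    (h : (∃ x y : Fin d → ℝ, x ≠ y ∧
            x ∈ convexHull ℝ (A : Set (Fin d → ℝ)) ∩ (V : Set (Fin d → ℝ)) ∧
            y ∈ convexHull ℝ (A : Set (Fin d → ℝ)) ∩ (V : Set (Fin d → ℝ))) ∨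
          (∃ x : Fin d → ℝ, x ∈ (V : Set (Fin d → ℝ)) ∧
            x ∈ intrinsicFrontier ℝ (convexHull ℝ (A : Set (Fin d → ℝ))))) :
    ∃ B : Finset (Fin d → ℝ), B ⊆ A ∧ B.card = j ∧
      (convexHull ℝ (B : Set (Fin d → ℝ)) ∩ (V : Set (Fin d → ℝ))).Nonempty := by
    classical
  suffices h' : ∃ a0 ∈ A, ∃ z : Fin d → ℝ,
      z ∈ convexHull ℝ ((A.erase a0 : Finset (Fin d → ℝ)) : Set (Fin d → ℝ)) ∧
      z ∈ (V : Set (Fin d → ℝ)) by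
    obtain ⟨a0, ha0, z, hz1, hz2⟩ := h'
    exact ⟨A.erase a0, Finset.erase_subset _ _,
      by rw [Finset.card_erase_of_mem ha0, hcard]; rfl, ⟨z, hz1, hz2⟩⟩
  rcases h with ⟨x, y, hxy, ⟨hxA, hxV⟩, ⟨hyA, hyV⟩⟩ | ⟨x, hxV, hxF⟩
  · -- Case 1
    rw [Finset.convexHull_eq] at hxA hyA
    obtain ⟨wx, hwx0, hwx1, hwxc⟩ := hxA
    obtain ⟨wy, hwy0, hwy1, hwyc⟩ := hyA
    have hne : ∃ a ∈ A, wx a < wy a := by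
      by_contra hcon
      push_neg at hcon
      have heq : ∀ a ∈ A, wy a = wx a :=
        (Finset.sum_eq_sum_iff_of_le hcon).mp (hwy1.trans hwx1.symm)
      apply hxy
      rw [← hwxc, ← hwyc, Finset.centerMass_eq_of_sum_1 _ _ hwx1,
        Finset.centerMass_eq_of_sum_1 _ _ hwy1]
      exact (Finset.sum_congr rfl fun a ha => by rw [heq a ha]).symm
    set S := A.filter (fun a => wx a - wy a < 0) with hSdef
    have hSne : S.Nonempty := by
      obtain ⟨a, ha, hlt⟩ := hne
      exact ⟨a, Finset.mem_filter.mpr ⟨ha, by linarith⟩⟩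
    set f : (Fin d → ℝ) → ℝ := fun a => wy a / (wy a - wx a) with hf
    set t0 := S.inf' hSne f with ht0
    obtain ⟨a0, ha0S, ha0⟩ := S.exists_mem_eq_inf' hSne f
    have ha0A : a0 ∈ A := (Finset.mem_filter.mp ha0S).1
    have ha0c : wx a0 - wy a0 < 0 := (Finset.mem_filter.mp ha0S).2
    have hD0 : 0 < wy a0 - wx a0 := by linarith
    have hle : ∀ a ∈ S, t0 ≤ f a := fun a ha => Finset.inf'_le f ha
    have ht0nn : 0 ≤ t0 := by
      rw [ht0, ha0, hf]
      exact div_nonneg (hwy0 a0 ha0A) hD0.le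
    set wz : (Fin d → ℝ) → ℝ := fun a => wy a + t0 * (wx a - wy a) with hwz
    have hz0 : wz a0 = 0 := by
      rw [hwz]
      simp only
      rw [ht0, ha0, hf]
      field_simp
      ring
    have hznn : ∀ a ∈ A, 0 ≤ wz a := by
      intro a ha
      by_cases hca : wx a - wy a < 0
      · have haS : a ∈ S := Finset.mem_filter.mpr ⟨ha, hca⟩
        have h1 : t0 ≤ wy a / (wy a - wx a) := hle a haS
        have hD : 0 < wy a - wx a := by linarith
        rw [le_div_iff₀ hD] at h1
        simp only [hwz]
        nlinarith
      · push_neg at hca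
        simp only [hwz]
        have := hwy0 a ha
        nlinarith
    have hzsum : ∑ a ∈ A, wz a = 1 := by
      simp only [hwz]
      rw [Finset.sum_add_distrib, ← Finset.mul_sum, Finset.sum_sub_distrib, hwx1, hwy1]
      ring
    refine ⟨a0, ha0A, A.centerMass wz id, aux_zero A wz hznn hzsum hz0, ?_⟩
    have hzeq : A.centerMass wz id = t0 • (x - y) + y := by
      rw [Finset.centerMass_eq_of_sum_1 _ _ hzsum, ← hwxc, ← hwyc,
        Finset.centerMass_eq_of_sum_1 _ _ hwx1, Finset.centerMass_eq_of_sum_1 _ _ hwy1,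
        smul_sub, Finset.smul_sum, Finset.smul_sum, ← Finset.sum_sub_distrib,
        ← Finset.sum_add_distrib]
      refine Finset.sum_congr rfl fun a _ => ?_
      simp only [hwz, id]
      module
    rw [hzeq]
    have hmem := V.smul_vsub_vadd_mem t0 hxV hyV hyV
    simpa [vsub_eq_sub, vadd_eq_add] using hmem
  · -- Case 2
    have hxA : x ∈ convexHull ℝ (A : Set (Fin d → ℝ)) :=
      intrinsicFrontier_subset (A.finite_toSet.isClosed_convexHull ℝ) hxF
    rw [Finset.convexHull_eq] at hxA
    obtain ⟨w, hw0, hw1, hwc⟩ := hxA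
    by_cases hz : ∃ a ∈ A, w a = 0
    · obtain ⟨a0, ha0, h0⟩ := hz
      exact ⟨a0, ha0, x, by rw [← hwc]; exact aux_zero A w hw0 hw1 h0, hxV⟩
    · exfalso
      push_neg at hz
      have hpos : ∀ a ∈ A, 0 < w a := fun a ha => lt_of_le_of_ne (hw0 a ha) (Ne.symm (hz a ha))
      have hint : x ∈ intrinsicInterior ℝ (convexHull ℝ (A : Set (Fin d → ℝ))) :=
        aux_interior A hindep w hw1 hpos hwc.symm
      obtain ⟨y', hy'f, hy'c⟩ := hxF
      obtain ⟨x'', hx''i, hx''c⟩ := hint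
      have hyx : y' = x'' := Subtype.ext (hy'c.trans hx''c.symm)
      exact hy'f.2 (hyx ▸ hx''i)
end
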